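/- For each n ∈ ℤ, W₀(n) := ∫₀¹ p_u(n)/u du is finite for n ≠ 0, and W_∞(n) := ∫₁^∞ p_u(n)/u du is finite for all n ∈ ℤ. -/

import Mathlib

open MeasureTheory Real Set

/-- The modified Bessel function of the first kind of integer order, via its power series. -/
noncomputable def besselI (k : ℕ) (z : ℝ) : ℝ :=
  ∑' m : ℕ, (z/2) ^ (2*m + k) / ((Nat.factorial m : ℝ) * (Nat.factorial (m + k) : ℝ))

/-- The heat kernel of the discrete Laplacian on ℤ: p_u(k) = e^{-2u} I_{|k|}(2u). -/
noncomputable def discHeat (u : ℝ) (k : ℤ) : ℝ := Real.exp (-2*u) * besselI k.natAbs (2*u)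


lemma cb_sq_bound (M : ℕ) : ((Nat.centralBinom M : ℝ))^2 * (3*M+1) ≤ 16^M := by
  induction M with
  | zero => simp [Nat.centralBinom]
  | succ n ih =>
    have key : ((n:ℝ) + 1) * Nat.centralBinom (n+1) = 2 * (2*n+1) * Nat.centralBinom n := by
      exact_mod_cast congrArg (Nat.cast : ℕ → ℝ) (Nat.succ_mul_centralBinom_succ n)
    have hpos : (0:ℝ) < ((n:ℝ)+1)^2 * (3*n+1) := by positivity
    rw [← mul_le_mul_iff_of_pos_right hpos]
    push_cast
    have e1 : ((Nat.centralBinom (n+1) : ℝ))^2 * (3*(n+1)+1) * (((n:ℝ)+1)^2 * (3*n+1))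
        = (((n:ℝ)+1) * Nat.centralBinom (n+1))^2 * ((3*n+4) * (3*n+1)) := by ring
    rw [e1, key]
    have h2 : (2 * (2*(n:ℝ)+1) * Nat.centralBinom n)^2 * ((3*n+4) * (3*n+1))
        = (((Nat.centralBinom n : ℝ))^2 * (3*n+1)) * (4*(2*n+1)^2*(3*n+4)) := by ring
    rw [h2]
    have h3 : (4:ℝ)*(2*n+1)^2*(3*n+4) ≤ 16*((n:ℝ)+1)^2*(3*n+1) := by nlinarith [sq_nonneg ((n:ℝ))]
    have hcb : (0:ℝ) ≤ ((Nat.centralBinom n : ℝ))^2 * (3*n+1) := by positivity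
    calc ((Nat.centralBinom n : ℝ))^2 * (3*n+1) * (4*(2*n+1)^2*(3*n+4))
        ≤ 16^n * (16*((n:ℝ)+1)^2*(3*n+1)) := by
          apply mul_le_mul ih h3 (by positivity) (by positivity)
      _ = 16^(n+1) * (((n:ℝ)+1)^2 * (3*n+1)) := by ring

lemma choose_sq_bound (N m : ℕ) : ((N.choose m : ℝ))^2 * N ≤ 4^N := by
  have h0' : ((N.choose m : ℝ))^2 * N ≤ ((N.choose (N/2) : ℝ))^2 * N := by
    have : (N.choose m)^2 * N ≤ (N.choose (N/2))^2 * N :=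
      Nat.mul_le_mul_right _ (Nat.pow_le_pow_left (Nat.choose_le_middle m N) 2)
    exact_mod_cast this
  refine h0'.trans ?_
  rcases Nat.even_or_odd N with ⟨M, hM⟩ | ⟨M, hM⟩
  · subst hM
    have hdiv : (M + M) / 2 = M := by omega
    have he : (M + M).choose M = Nat.centralBinom M := by
      rw [Nat.centralBinom_eq_two_mul_choose]; congr 1; omega
    rw [hdiv, he]
    calc ((Nat.centralBinom M : ℝ))^2 * (M+M : ℕ) ≤ ((Nat.centralBinom M : ℝ))^2 * (3*M+1) := by
          apply mul_le_mul_of_nonneg_left (by push_cast; linarith) (by positivity)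
      _ ≤ 16^M := cb_sq_bound M
      _ ≤ 4^(M+M) := le_of_eq (by rw [pow_add, ← mul_pow]; norm_num)
  · subst hM
    have hdiv : (2*M + 1) / 2 = M := by omega
    rw [hdiv]
    have hsum : 2 * (2*M+1).choose M = Nat.centralBinom (M+1) := by
      rw [Nat.centralBinom_eq_two_mul_choose, show 2*(M+1) = (2*M+1)+1 by ring,
        Nat.choose_succ_succ, Nat.choose_symm_half, two_mul]
    have h2 : ((2 * (2*M+1).choose M : ℕ) : ℝ)^2 * (3*(M+1)+1) ≤ 16^(M+1) := by
      rw [hsum]; exact_mod_cast cb_sq_bound (M+1)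
    have hp : (4:ℝ)^(2*M+1) = 4*16^M := by
      rw [pow_succ, pow_mul]; norm_num [mul_comm]
    push_cast at h2 ⊢
    rw [hp]
    rw [show (16:ℝ)^(M+1) = 16*16^M by rw [pow_succ]; ring] at h2
    nlinarith [mul_nonneg (sq_nonneg ((((2*M+1).choose M : ℕ)) : ℝ)) (Nat.cast_nonneg (α := ℝ) M)]

lemma choose_sqrt_bound (N m : ℕ) : (N.choose m : ℝ) * Real.sqrt N ≤ 2^N := by
  have h : (N.choose m : ℝ) * Real.sqrt N = Real.sqrt (((N.choose m : ℝ))^2 * N) := by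
    rw [Real.sqrt_mul (by positivity), Real.sqrt_sq (by positivity)]
  have h4 : (4:ℝ)^N = (2^N)^2 := by rw [← pow_mul, mul_comm, pow_mul]; norm_num
  rw [h, show (2:ℝ)^N = Real.sqrt ((2^N)^2) from (Real.sqrt_sq (by positivity)).symm, ← h4]
  exact Real.sqrt_le_sqrt (choose_sq_bound N m)

lemma exp_tsum (x : ℝ) : Real.exp x = ∑' N : ℕ, x^N / (N.factorial : ℝ) := by
  rw [Real.exp_eq_exp_ℝ, NormedSpace.exp_eq_tsum_div]

lemma summable_besselI (k : ℕ) (z : ℝ) :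
    Summable (fun m : ℕ => (z/2) ^ (2*m + k) / ((Nat.factorial m : ℝ) * (Nat.factorial (m + k) : ℝ))) := by
  have hs : Summable (fun m : ℕ => |z/2|^k * ((|z/2|^2)^m / (Nat.factorial m : ℝ))) :=
    (Real.summable_pow_div_factorial (|z/2|^2)).mul_left _
  apply Summable.of_norm_bounded hs
  intro m
  have hfac : (1:ℝ) ≤ ((m+k).factorial : ℝ) := by exact_mod_cast (m+k).factorial_pos
  have hfm : (0:ℝ) < (m.factorial : ℝ) := by exact_mod_cast m.factorial_pos
  have h1 : ‖(z/2) ^ (2*m+k) / ((m.factorial : ℝ) * ((m+k).factorial : ℝ))‖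
      = |z/2|^(2*m+k) / ((m.factorial : ℝ) * ((m+k).factorial : ℝ)) := by
    have hd : |(m.factorial:ℝ) * ((m+k).factorial:ℝ)| = (m.factorial:ℝ) * ((m+k).factorial:ℝ) :=
      abs_of_pos (by positivity)
    rw [norm_div, Real.norm_eq_abs, Real.norm_eq_abs, abs_pow, hd]
  rw [h1]
  have h2 : |z/2|^(2*m+k) = |z/2|^k * (|z/2|^2)^m := by
    rw [← pow_mul, ← pow_add]; ring_nf
  rw [h2, mul_div_assoc]
  apply mul_le_mul_of_nonneg_left _ (by positivity)
  apply div_le_div_of_nonneg_left (by positivity) hfm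
  nlinarith

lemma measurable_besselI (k : ℕ) : Measurable (besselI k) := by
  have : ∀ z, Filter.Tendsto
      (fun n => ∑ m ∈ Finset.range n, (z/2) ^ (2*m + k) / ((Nat.factorial m : ℝ) * (Nat.factorial (m + k) : ℝ)))
      Filter.atTop (nhds (besselI k z)) := by
    intro z
    exact (summable_besselI k z).hasSum.tendsto_sum_nat
  apply measurable_of_tendsto_metrizable (f := fun n z => ∑ m ∈ Finset.range n,
      (z/2) ^ (2*m + k) / ((Nat.factorial m : ℝ) * (Nat.factorial (m + k) : ℝ)))
  · intro n
    apply Finset.measurable_sum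
    intro m _
    exact ((measurable_id.div_const 2).pow_const _).div_const _
  · exact tendsto_pi_nhds.2 this

lemma besselI_nonneg (k : ℕ) {z : ℝ} (hz : 0 ≤ z) : 0 ≤ besselI k z :=
  tsum_nonneg fun m => by positivity

lemma besselI_small (k : ℕ) (hk : 1 ≤ k) {u : ℝ} (hu0 : 0 ≤ u) (hu1 : u ≤ 1) :
    besselI k (2*u) ≤ u * Real.exp 1 := by
  have h2u : (2*u)/2 = u := by ring
  have hle : ∀ m : ℕ, ((2*u)/2) ^ (2*m + k) / ((Nat.factorial m : ℝ) * (Nat.factorial (m + k) : ℝ))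
      ≤ u * ((u^2)^m / (Nat.factorial m : ℝ)) := by
    intro m
    rw [h2u]
    have hfac : (1:ℝ) ≤ ((m+k).factorial : ℝ) := by exact_mod_cast (m+k).factorial_pos
    have hfm : (0:ℝ) < (m.factorial : ℝ) := by exact_mod_cast m.factorial_pos
    have hp : u ^ (2*m+k) ≤ u ^ (2*m+1) := pow_le_pow_of_le_one hu0 hu1 (by omega)
    have hp2 : u ^ (2*m+1) = u * (u^2)^m := by rw [← pow_mul]; ring
    calc u ^ (2*m+k) / ((m.factorial : ℝ) * ((m+k).factorial : ℝ))
        ≤ u ^ (2*m+1) / ((m.factorial : ℝ) * ((m+k).factorial : ℝ)) := by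
          gcongr
      _ ≤ u ^ (2*m+1) / (m.factorial : ℝ) := by
          apply div_le_div_of_nonneg_left (by positivity) hfm
          nlinarith
      _ = u * ((u^2)^m / (m.factorial : ℝ)) := by rw [hp2, mul_div_assoc]
  unfold besselI
  calc (∑' m : ℕ, ((2*u)/2) ^ (2*m + k) / ((Nat.factorial m : ℝ) * (Nat.factorial (m + k) : ℝ))) ≤ ∑' m : ℕ, u * ((u^2)^m / (Nat.factorial m : ℝ)) := by
        apply Summable.tsum_le_tsum hle (summable_besselI k (2*u))
        exact ((Real.summable_pow_div_factorial (u^2)).mul_left u)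
    _ = u * Real.exp (u^2) := by
        rw [tsum_mul_left]
        congr 1
        rw [Real.exp_eq_exp_ℝ, NormedSpace.exp_eq_tsum_div]
    _ ≤ u * Real.exp 1 := by
        apply mul_le_mul_of_nonneg_left _ hu0
        apply Real.exp_le_exp.2
        nlinarith

lemma besselI_big (k : ℕ) {u : ℝ} (hu : 0 < u) :
    besselI k (2*u) ≤ 1 + Real.exp (2*u) / Real.sqrt u := by
  set s := Real.sqrt u with hs_def
  have hs : 0 < s := Real.sqrt_pos.2 hu
  set a : ℕ → ℝ := fun N => (2*u)^N / (N.factorial : ℝ) with ha_def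
  have ha_pos : ∀ N, 0 < a N := fun N => by
    have : (0:ℝ) < (N.factorial : ℝ) := by exact_mod_cast N.factorial_pos
    positivity
  set g : ℕ → ℝ := fun m =>
    (if m = 0 ∧ k = 0 then (1:ℝ) else 0) + (1/(2*s)) * (a (2*m+k) + a (2*m+k+1)) with hg_def
  have sa : Summable a := Real.summable_pow_div_factorial (2*u)
  have inj1 : Function.Injective (fun m : ℕ => 2*m+k) := fun x y h => by
    simp only at h; omega
  have inj2 : Function.Injective (fun m : ℕ => 2*m+k+1) := fun x y h => by
    simp only at h; omega
  have sg2 : Summable (fun m => a (2*m+k)) := sa.comp_injective inj1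
  have sg3 : Summable (fun m => a (2*m+k+1)) := sa.comp_injective inj2
  have sg1 : Summable (fun m : ℕ => if m = 0 ∧ k = 0 then (1:ℝ) else 0) := by
    apply summable_of_ne_finset_zero (s := {0})
    intro m hm
    simp only [Finset.mem_singleton] at hm
    rw [if_neg (by tauto)]
  have sgsum : Summable (fun m => (1/(2*s)) * (a (2*m+k) + a (2*m+k+1))) :=
    (sg2.add sg3).mul_left _
  have sg : Summable g := sg1.add sgsum
  -- termwise bound
  have hle : ∀ m : ℕ, ((2*u)/2) ^ (2*m + k) / ((Nat.factorial m : ℝ) * (Nat.factorial (m + k) : ℝ)) ≤ g m := by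
    intro m
    have h2u : (2*u)/2 = u := by ring
    rw [h2u]
    by_cases hzero : 2*m+k = 0
    · have hm0 : m = 0 := by omega
      have hk0 : k = 0 := by omega
      subst hm0; subst hk0
      simp only [hg_def]
      norm_num
      positivity
    · -- N ≥ 1 case
      set N := 2*m+k with hN_def
      have hN1 : 1 ≤ N := by omega
      have hNr : (1:ℝ) ≤ (N:ℝ) := by exact_mod_cast hN1
      have hsN : 0 < Real.sqrt N := Real.sqrt_pos.2 (by positivity)
      set C := N.choose m with hC_def
      have hCnat : C * (m.factorial * (m+k).factorial) = N.factorial := by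
        have h := Nat.choose_mul_factorial_mul_factorial (show m ≤ N by omega)
        rw [show N - m = m + k by omega] at h
        rw [hC_def, ← h]; ring
      have hfacmul : (C:ℝ) * ((m.factorial:ℝ) * ((m+k).factorial:ℝ)) = (N.factorial:ℝ) := by
        exact_mod_cast congrArg (Nat.cast : ℕ → ℝ) hCnat
      have hfm : (0:ℝ) < (m.factorial : ℝ) := by exact_mod_cast m.factorial_pos
      have hfmk : (0:ℝ) < ((m+k).factorial : ℝ) := by exact_mod_cast (m+k).factorial_pos
      have hfN : (0:ℝ) < (N.factorial : ℝ) := by exact_mod_cast N.factorial_pos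
      have hC2 : 2*s*(C:ℝ) ≤ 2^N * (1 + 2*u/((N:ℝ)+1)) := by
        have e1 : (C:ℝ) ≤ 2^N/Real.sqrt N := (le_div_iff₀ hsN).2 (choose_sqrt_bound N m)
        have e2 : s / Real.sqrt N = Real.sqrt (u/N) := by
          rw [hs_def, ← Real.sqrt_div hu.le]
        have e3 : 2*Real.sqrt (u/(N:ℝ)) ≤ 1 + u/N := by
          nlinarith [sq_nonneg (Real.sqrt (u/(N:ℝ)) - 1), Real.sq_sqrt (show (0:ℝ) ≤ u/N by positivity)]
        have e4 : u/(N:ℝ) ≤ 2*u/((N:ℝ)+1) := by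
          rw [div_le_div_iff₀ (by positivity) (by positivity)]
          nlinarith
        calc 2*s*(C:ℝ) ≤ 2*s*(2^N/Real.sqrt N) := by
              apply mul_le_mul_of_nonneg_left e1 (by positivity)
          _ = 2^N * (2*(s/Real.sqrt N)) := by ring
          _ = 2^N * (2*Real.sqrt (u/N)) := by rw [e2]
          _ ≤ 2^N * (1 + u/N) := by
              apply mul_le_mul_of_nonneg_left e3 (by positivity)
          _ ≤ 2^N * (1 + 2*u/((N:ℝ)+1)) := by
              apply mul_le_mul_of_nonneg_left (by linarith) (by positivity)
      have hfN1 : (((N+1).factorial : ℕ) : ℝ) = ((N:ℝ)+1)*(N.factorial:ℝ) := by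
        rw [Nat.factorial_succ]; push_cast; ring
      have lhs_eq : u^N/((m.factorial:ℝ)*((m+k).factorial:ℝ)) = (2^N*u^N/(N.factorial:ℝ)) * ((C:ℝ)/2^N) := by
        rw [← hfacmul]
        have hCpos : (0:ℝ) < (C:ℝ) := by
          have : 0 < C := Nat.choose_pos (show m ≤ N by omega)
          exact_mod_cast this
        field_simp
      have h' : (C:ℝ)/2^N ≤ 1/(2*s)*(1+2*u/((N:ℝ)+1)) := by
        rw [div_le_iff₀ (show (0:ℝ) < 2^N by positivity),
          show (1/(2*s)*(1+2*u/((N:ℝ)+1)) * 2^N) = (2^N*(1+2*u/((N:ℝ)+1)))/(2*s) by ring,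
          le_div_iff₀ (by positivity)]
        linarith [hC2]
      have rhs_eq : (1/(2*s)) * (a N + a (N+1)) = (2^N*u^N/(N.factorial:ℝ)) * (1/(2*s)*(1+2*u/((N:ℝ)+1))) := by
        simp only [ha_def]
        rw [hfN1, mul_pow, mul_pow]
        field_simp
        ring
      have gge : (if m = 0 ∧ k = 0 then (1:ℝ) else 0) = 0 := by
        rw [if_neg (by omega)]
      calc u^N/((m.factorial:ℝ)*((m+k).factorial:ℝ))
          = (2^N*u^N/(N.factorial:ℝ)) * ((C:ℝ)/2^N) := lhs_eq
        _ ≤ (2^N*u^N/(N.factorial:ℝ)) * (1/(2*s)*(1+2*u/((N:ℝ)+1))) := by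
            apply mul_le_mul_of_nonneg_left h' (by positivity)
        _ = (1/(2*s)) * (a N + a (N+1)) := rhs_eq.symm
        _ ≤ g m := by rw [hg_def]; simp only [gge]; rw [zero_add]
  -- sum the bound
  have hbound : besselI k (2*u) ≤ ∑' m, g m := by
    unfold besselI
    exact Summable.tsum_le_tsum hle (summable_besselI k (2*u)) sg
  refine hbound.trans ?_
  have hsplit : ∑' m, g m = (∑' m : ℕ, if m = 0 ∧ k = 0 then (1:ℝ) else 0)
      + (1/(2*s)) * ((∑' m, a (2*m+k)) + (∑' m, a (2*m+k+1))) := by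
    rw [Summable.tsum_add sg1 sgsum, tsum_mul_left, Summable.tsum_add sg2 sg3]
  rw [hsplit]
  have hT1 : (∑' m : ℕ, if m = 0 ∧ k = 0 then (1:ℝ) else 0) ≤ 1 := by
    rw [tsum_eq_single 0 (fun m hm => by rw [if_neg (by tauto)])]
    split_ifs <;> norm_num
  have hT2 : (∑' m, a (2*m+k)) ≤ Real.exp (2*u) := by
    rw [exp_tsum (2*u)]
    exact Summable.tsum_le_tsum_of_inj _ inj1 (fun c _ => (ha_pos c).le) (fun m => le_rfl) sg2 sa
  have hT3 : (∑' m, a (2*m+k+1)) ≤ Real.exp (2*u) := by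
    rw [exp_tsum (2*u)]
    exact Summable.tsum_le_tsum_of_inj _ inj2 (fun c _ => (ha_pos c).le) (fun m => le_rfl) sg3 sa
  have : (1/(2*s)) * ((∑' m, a (2*m+k)) + (∑' m, a (2*m+k+1)))
      ≤ (1/(2*s)) * (Real.exp (2*u) + Real.exp (2*u)) := by
    apply mul_le_mul_of_nonneg_left (by linarith) (by positivity)
  have heq : (1/(2*s)) * (Real.exp (2*u) + Real.exp (2*u)) = Real.exp (2*u) / s := by
    field_simp; ring
  linarith [this, hT1, heq ▸ this]

theorem stmt14 (n : ℤ) :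
    (n ≠ 0 → IntegrableOn (fun u => discHeat u n / u) (Ioo (0:ℝ) 1)) ∧
    IntegrableOn (fun u => discHeat u n / u) (Ioi (1:ℝ)) := by
  have hmeas : Measurable (fun u : ℝ => discHeat u n / u) := by
    unfold discHeat
    apply Measurable.div _ measurable_id
    apply Measurable.mul
    · exact Real.measurable_exp.comp (by fun_prop)
    · exact (measurable_besselI _).comp (by fun_prop)
  constructor
  · intro hn
    have hk : 1 ≤ n.natAbs := Int.natAbs_pos.mpr hn
    apply Measure.integrableOn_of_bounded (M := Real.exp 1) measure_Ioo_lt_top.ne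
      hmeas.aestronglyMeasurable
    rw [ae_restrict_iff' measurableSet_Ioo]
    apply Filter.Eventually.of_forall
    intro u hu
    obtain ⟨hu0, hu1⟩ := hu
    have hnn : 0 ≤ discHeat u n / u := by
      apply div_nonneg _ hu0.le
      exact mul_nonneg (Real.exp_nonneg _) (besselI_nonneg _ (by linarith))
    rw [Real.norm_eq_abs, abs_of_nonneg hnn]
    have h1 : discHeat u n ≤ u * Real.exp 1 := by
      unfold discHeat
      calc Real.exp (-2*u) * besselI n.natAbs (2*u) ≤ 1 * (u * Real.exp 1) := by
            apply mul_le_mul (Real.exp_le_one_iff.2 (by linarith))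
              (besselI_small _ hk hu0.le hu1.le) (besselI_nonneg _ (by linarith)) one_pos.le
        _ = u * Real.exp 1 := one_mul _
    rw [div_le_iff₀ hu0]
    calc discHeat u n ≤ u * Real.exp 1 := h1
      _ = Real.exp 1 * u := mul_comm _ _
  · apply Integrable.mono' (g := fun u => Real.exp (-2*u) + u ^ (-3/2 : ℝ))
    · exact (exp_neg_integrableOn_Ioi 1 two_pos).add
        (integrableOn_Ioi_rpow_of_lt (by norm_num) one_pos)
    · exact hmeas.aestronglyMeasurable.restrict
    · rw [ae_restrict_iff' measurableSet_Ioi]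
      apply Filter.Eventually.of_forall
      intro u hu
      simp only [mem_Ioi] at hu
      have hu0 : (0:ℝ) < u := by linarith
      have hnn : 0 ≤ discHeat u n / u := by
        apply div_nonneg _ hu0.le
        exact mul_nonneg (Real.exp_nonneg _) (besselI_nonneg _ (by linarith))
      rw [Real.norm_eq_abs, abs_of_nonneg hnn]
      have hs : 0 < Real.sqrt u := Real.sqrt_pos.2 hu0
      have hs1 : 1 ≤ Real.sqrt u := by
        rw [show (1:ℝ) = Real.sqrt 1 from (Real.sqrt_one).symm]
        exact Real.sqrt_le_sqrt hu.le
      have h1 : discHeat u n ≤ Real.exp (-2*u) + 1 / Real.sqrt u := by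
        unfold discHeat
        have hb := besselI_big n.natAbs hu0
        have : Real.exp (-2*u) * besselI n.natAbs (2*u)
            ≤ Real.exp (-2*u) * (1 + Real.exp (2*u) / Real.sqrt u) :=
          mul_le_mul_of_nonneg_left hb (Real.exp_nonneg _)
        calc Real.exp (-2*u) * besselI n.natAbs (2*u)
            ≤ Real.exp (-2*u) * (1 + Real.exp (2*u) / Real.sqrt u) := this
          _ = Real.exp (-2*u) + (Real.exp (-2*u) * Real.exp (2*u)) / Real.sqrt u := by ring
          _ = Real.exp (-2*u) + 1 / Real.sqrt u := by
              rw [← Real.exp_add]; norm_num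
      have h2 : discHeat u n / u ≤ (Real.exp (-2*u) + 1 / Real.sqrt u) / u := by
        gcongr
      refine h2.trans ?_
      have hrp : (1 / Real.sqrt u) / u = u ^ (-3/2 : ℝ) := by
        rw [show (-3/2 : ℝ) = -(3/2) by norm_num, Real.rpow_neg hu0.le, Real.sqrt_eq_rpow]
        rw [show (3/2 : ℝ) = 1/2 + 1 by norm_num, Real.rpow_add hu0, Real.rpow_one]
        field_simp
      rw [add_div, hrp]
      apply add_le_add_left
      rw [div_le_iff₀ hu0]
      nlinarith [Real.exp_nonneg (-2*u)]
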